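/- Let h be a complete Heyting algebra embedded in ∏_{i∈I} 2, let P be a nonempty set, and let H be the pullback (in Sets) of the embedding h → ∏_{i∈I} 2 along the componentwise D-quotient map ∏_{i∈I} P̂ → ∏_{i∈I} 2. Then H, with componentwise operations from P̂, is a strongly distributive skew lattice whose quotient H/D by Green's relation is isomorphic to h as a lattice. -/
import Mathlib


/-- The meet on P̂ = P ∪ {0} (with `none` as 0). -/
def pMeet {P : Type*} : Option P → Option P → Option P
  | some a, some _ => some a
  | _, _ => none

/-- The join on P̂ = P ∪ {0}. -/
def pJoin {P : Type*} : Option P → Option P → Option P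
  | some _, some b => some b
  | none, y => y
  | x, none => x

/-- Componentwise meet on ∏_{i∈I} P̂. -/
def prodMeet {I P : Type*} (x y : I → Option P) : I → Option P := fun i => pMeet (x i) (y i)

/-- Componentwise join on ∏_{i∈I} P̂. -/
def prodJoin {I P : Type*} (x y : I → Option P) : I → Option P := fun i => pJoin (x i) (y i)

/-- Green's relation D on ∏_{i∈I} P̂. -/
def prodD {I P : Type*} (x y : I → Option P) : Prop :=
  prodMeet (prodMeet x y) x = x ∧ prodMeet (prodMeet y x) y = y

/-- The pullback H of the embedding e : h → ∏_i 2 along the componentwise D-quotient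
∏_i P̂ → ∏_i 2 (which sends a coordinate to `true` iff it is nonzero); identifying
the two-element lattice 2 with `Bool`. -/
def pullbackH {I P h : Type*} (e : h → I → Bool) : Set (I → Option P) :=
  {x | ∃ a : h, ∀ i, (x i).isSome = e a i}


theorem pMeet_isSome' {P : Type*} (x y : Option P) :
    (pMeet x y).isSome = (x.isSome && y.isSome) := by
  cases x <;> cases y <;> rfl

theorem pJoin_isSome' {P : Type*} (x y : Option P) :
    (pJoin x y).isSome = (x.isSome || y.isSome) := by
  cases x <;> cases y <;> rfl

theorem prodD_iff' {I P : Type*} (x y : I → Option P) :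
    prodD x y ↔ ∀ i, (x i).isSome = (y i).isSome := by
  constructor
  · rintro ⟨h1, h2⟩ i
    have e1 := congrFun h1 i
    have e2 := congrFun h2 i
    simp only [prodMeet] at e1 e2
    cases hx : x i <;> cases hy : y i <;> simp_all [pMeet]
  · intro hiff
    constructor <;> funext i <;>
      · have := hiff i
        simp only [prodMeet]
        cases hx : x i <;> cases hy : y i <;> simp_all [pMeet]

/-- H is a strongly distributive skew lattice under the componentwise operations, and
its quotient H/D by Green's relation is isomorphic to h as a lattice. -/
theorem pullbackH_skew_lattice {I P h : Type*} [Nonempty P] [Order.Frame h]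
    (e : h → I → Bool) (he_inj : Function.Injective e)
    (he_inf : ∀ a b i, e (a ⊓ b) i = (e a i && e b i))
    (he_sup : ∀ a b i, e (a ⊔ b) i = (e a i || e b i)) :
    -- H is closed under the componentwise operations
    (∀ x ∈ pullbackH (P := P) e, ∀ y ∈ pullbackH (P := P) e,
        prodMeet x y ∈ pullbackH (P := P) e ∧ prodJoin x y ∈ pullbackH (P := P) e) ∧
    -- H is a strongly distributive skew lattice
    (∀ x ∈ pullbackH (P := P) e,
        prodMeet x x = x ∧ prodJoin x x = x) ∧
    (∀ x ∈ pullbackH (P := P) e, ∀ y ∈ pullbackH (P := P) e,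
        prodMeet x (prodJoin x y) = x ∧ prodJoin x (prodMeet x y) = x ∧
        prodJoin (prodMeet x y) y = y ∧ prodMeet (prodJoin x y) y = y) ∧
    (∀ x ∈ pullbackH (P := P) e, ∀ y ∈ pullbackH (P := P) e, ∀ z ∈ pullbackH (P := P) e,
        prodMeet (prodMeet x y) z = prodMeet x (prodMeet y z) ∧
        prodJoin (prodJoin x y) z = prodJoin x (prodJoin y z) ∧
        prodMeet (prodJoin x y) z = prodJoin (prodMeet x z) (prodMeet y z) ∧
        prodMeet x (prodJoin y z) = prodJoin (prodMeet x y) (prodMeet x z)) ∧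
    -- H/D ≅ h as lattices
    (∃ φ : (I → Option P) → h,
        (∀ a : h, ∃ x ∈ pullbackH (P := P) e, φ x = a) ∧
        (∀ x ∈ pullbackH (P := P) e, ∀ y ∈ pullbackH (P := P) e,
            (prodD x y ↔ φ x = φ y) ∧
            φ (prodMeet x y) = φ x ⊓ φ y ∧
            φ (prodJoin x y) = φ x ⊔ φ y)) := by
  classical
  have pm : ∀ x y : I → Option P, ∀ i, prodMeet x y i = pMeet (x i) (y i) := fun _ _ _ => rfl
  refine ⟨?_, ?_, ?_, ?_, ?_⟩
  · rintro x ⟨a, ha⟩ y ⟨b, hb⟩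
    exact ⟨⟨a ⊓ b, fun i => by rw [show prodMeet x y i = pMeet (x i) (y i) from rfl,
        pMeet_isSome', ha, hb, he_inf]⟩,
      ⟨a ⊔ b, fun i => by rw [show prodJoin x y i = pJoin (x i) (y i) from rfl,
        pJoin_isSome', ha, hb, he_sup]⟩⟩
  · intro x _
    constructor <;> funext i <;> cases hx : x i <;> simp [prodMeet, prodJoin, pMeet, pJoin, hx]
  · intro x _ y _
    refine ⟨?_, ?_, ?_, ?_⟩ <;> funext i <;>
      cases hx : x i <;> cases hy : y i <;> simp [prodMeet, prodJoin, pMeet, pJoin, hx, hy]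
  · intro x _ y _ z _
    refine ⟨?_, ?_, ?_, ?_⟩ <;> funext i <;>
      cases hx : x i <;> cases hy : y i <;> cases hz : z i <;>
        simp [prodMeet, prodJoin, pMeet, pJoin, hx, hy, hz]
  · set φ : (I → Option P) → h := fun x =>
      if hx : ∃ a : h, ∀ i, (x i).isSome = e a i then hx.choose else ⊥ with hφdef
    have hspec : ∀ x : I → Option P, ∀ a : h, (∀ i, (x i).isSome = e a i) → φ x = a := by
      intro x a ha
      have hx : ∃ a : h, ∀ i, (x i).isSome = e a i := ⟨a, ha⟩
      have h1 := hx.choose_spec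
      have : e hx.choose = e a := funext fun i => by rw [← h1 i, ha i]
      simp only [hφdef, dif_pos hx]
      exact he_inj this
    refine ⟨φ, ?_, ?_⟩
    · intro a
      obtain ⟨p⟩ := ‹Nonempty P›
      refine ⟨fun i => if e a i then some p else none, ⟨a, fun i => ?_⟩, hspec _ a fun i => ?_⟩ <;>
        · by_cases hi : e a i <;> simp [hi]
    · rintro x hx y hy
      obtain ⟨a, ha⟩ := hx
      obtain ⟨b, hb⟩ := hy
      have hxa := hspec x a ha
      have hyb := hspec y b hb
      refine ⟨?_, ?_, ?_⟩
      · rw [prodD_iff', hxa, hyb]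
        constructor
        · intro hiff
          exact he_inj (funext fun i => by rw [← ha i, ← hb i, hiff i])
        · intro hab i
          rw [ha i, hb i, hab]
      · rw [hxa, hyb]
        exact hspec _ (a ⊓ b) fun i => by
          rw [pm, pMeet_isSome', ha, hb, he_inf]
      · rw [hxa, hyb]
        exact hspec _ (a ⊔ b) fun i => by
          rw [show prodJoin x y i = pJoin (x i) (y i) from rfl, pJoin_isSome', ha, hb, he_sup]
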